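/- Let H be a (T+1)×(T+1) complex Hermitian matrix which is tridiagonal in the standard basis, with entries a_t := H_{t,t} and b_t := H_{t,t+1} (so H_{t+1,t} = conj(b_t)), and suppose b_t ≠ 0 for all 0 ≤ t ≤ T−1. Let ψ be an eigenvector of H for its smallest eigenvalue, and assume ψ_0 ≠ 0 and ψ_T ≠ 0. Then ψ_t ≠ 0 for all 0 ≤ t ≤ T, and for every 0 ≤ t ≤ T−1 the complex number ψ_{t+1} · b_t / ψ_t is a negative real number. -/

import Mathlib

open Matrix
variable {n : Type*} [Fintype n] [DecidableEq n]

lemma quadform_eig (H : Matrix n n ℂ) (hH : H.IsHermitian) (x : n → ℂ) :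
    star x ⬝ᵥ H *ᵥ x
      = ((∑ i, hH.eigenvalues i * ‖(star (hH.eigenvectorUnitary : Matrix n n ℂ) *ᵥ x) i‖ ^ 2 : ℝ) : ℂ) := by
  set U := (hH.eigenvectorUnitary : Matrix n n ℂ)
  set y := star U *ᵥ x with hy
  have h1 : star x ⬝ᵥ H *ᵥ x = star y ⬝ᵥ (diagonal (RCLike.ofReal ∘ hH.eigenvalues)) *ᵥ y := by
    conv_lhs => rw [hH.spectral_theorem, Unitary.conjStarAlgAut_apply]
    rw [← mulVec_mulVec, ← mulVec_mulVec, dotProduct_mulVec, hy]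
    congr 1
    rw [star_mulVec, show ((star U)ᴴ) = U from star_star U]
  rw [h1]
  push_cast
  rw [dotProduct]
  congr 1; ext i
  rw [mulVec_diagonal]
  simp only [Pi.star_apply, Function.comp_apply, Complex.star_def]
  have hc : (RCLike.ofReal (hH.eigenvalues i) : ℂ) = ((hH.eigenvalues i : ℝ) : ℂ) := rfl
  rw [hc, show (starRingEnd ℂ) (y i) * (((hH.eigenvalues i : ℝ) : ℂ) * y i)
      = ((hH.eigenvalues i : ℝ) : ℂ) * (y i * (starRingEnd ℂ) (y i)) by ring,
    Complex.mul_conj']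

lemma normsq_eig (H : Matrix n n ℂ) (hH : H.IsHermitian) (x : n → ℂ) :
    star x ⬝ᵥ x
      = ((∑ i, ‖(star (hH.eigenvectorUnitary : Matrix n n ℂ) *ᵥ x) i‖ ^ 2 : ℝ) : ℂ) := by
  set U := (hH.eigenvectorUnitary : Matrix n n ℂ)
  set y := star U *ᵥ x with hy
  have h1 : star y ⬝ᵥ y = star x ⬝ᵥ x := by
    rw [hy, star_mulVec, show ((star U)ᴴ) = U from star_star U, ← dotProduct_mulVec,
      mulVec_mulVec, (Matrix.mem_unitaryGroup_iff).mp hH.eigenvectorUnitary.2, one_mulVec]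
  rw [← h1, dotProduct]
  push_cast
  congr 1; ext i
  simp only [Pi.star_apply, Complex.star_def]
  rw [mul_comm, Complex.mul_conj']

lemma eigvec_of_quadform_le [Nonempty n] (H : Matrix n n ℂ) (hH : H.IsHermitian) (x : n → ℂ)
    (hle : (star x ⬝ᵥ H *ᵥ x).re ≤ (⨅ i, hH.eigenvalues i) * (star x ⬝ᵥ x).re) :
    H *ᵥ x = (((⨅ i, hH.eigenvalues i : ℝ)) : ℂ) • x := by
  set U := (hH.eigenvectorUnitary : Matrix n n ℂ)
  set y := star U *ᵥ x with hy
  set E := (⨅ i, hH.eigenvalues i) with hE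
  have hEle : ∀ i, E ≤ hH.eigenvalues i := fun i =>
    ciInf_le (Set.Finite.bddBelow (Set.finite_range _)) i
  have h1 := quadform_eig H hH x
  have h2 := normsq_eig H hH x
  have hre1 : (star x ⬝ᵥ H *ᵥ x).re = ∑ i, hH.eigenvalues i * ‖y i‖ ^ 2 := by
    rw [h1, Complex.ofReal_re]
  have hre2 : (star x ⬝ᵥ x).re = ∑ i, ‖y i‖ ^ 2 := by rw [h2, Complex.ofReal_re]
  rw [hre1, hre2, Finset.mul_sum] at hle
  have hterm : ∀ i ∈ Finset.univ, E * ‖y i‖ ^ 2 ≤ hH.eigenvalues i * ‖y i‖ ^ 2 :=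
    fun i _ => mul_le_mul_of_nonneg_right (hEle i) (by positivity)
  have hsum : ∑ i, E * ‖y i‖ ^ 2 = ∑ i, hH.eigenvalues i * ‖y i‖ ^ 2 :=
    le_antisymm (Finset.sum_le_sum hterm) hle
  have heach := (Finset.sum_eq_sum_iff_of_le hterm).mp hsum
  have hDy : (diagonal (RCLike.ofReal ∘ hH.eigenvalues)) *ᵥ y = ((E : ℝ) : ℂ) • y := by
    ext i
    rw [mulVec_diagonal]
    simp only [Function.comp_apply, Pi.smul_apply, smul_eq_mul]
    by_cases hyi : y i = 0
    · simp [hyi]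
    · have : hH.eigenvalues i = E := by
        have h := heach i (Finset.mem_univ i)
        have ha : ‖y i‖ ^ 2 ≠ 0 := pow_ne_zero _ (norm_ne_zero_iff.mpr hyi)
        exact (mul_right_cancel₀ ha h).symm
      rw [show (RCLike.ofReal (hH.eigenvalues i) : ℂ) = ((hH.eigenvalues i : ℝ) : ℂ) from rfl,
        this]
  have hUy : U *ᵥ y = x := by
    rw [hy, mulVec_mulVec, (Matrix.mem_unitaryGroup_iff).mp hH.eigenvectorUnitary.2, one_mulVec]
  conv_lhs => rw [hH.spectral_theorem, Unitary.conjStarAlgAut_apply]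
  rw [← mulVec_mulVec, ← mulVec_mulVec, ← hy, hDy, mulVec_smul, hUy]

lemma quadform_ge [Nonempty n] (H : Matrix n n ℂ) (hH : H.IsHermitian) (x : n → ℂ) :
    (⨅ i, hH.eigenvalues i) * (star x ⬝ᵥ x).re ≤ (star x ⬝ᵥ H *ᵥ x).re := by
  set U := (hH.eigenvectorUnitary : Matrix n n ℂ)
  set y := star U *ᵥ x with hy
  set E := (⨅ i, hH.eigenvalues i) with hE
  have hEle : ∀ i, E ≤ hH.eigenvalues i := fun i =>
    ciInf_le (Set.Finite.bddBelow (Set.finite_range _)) i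
  rw [quadform_eig H hH x, normsq_eig H hH x, Complex.ofReal_re, Complex.ofReal_re,
    Finset.mul_sum]
  exact Finset.sum_le_sum fun i _ =>
    mul_le_mul_of_nonneg_right (hEle i) (by positivity)

lemma tridiag_expand (T : ℕ) (H : Matrix (Fin (T+1)) (Fin (T+1)) ℂ)
    (htri : ∀ t t' : Fin (T + 1), 1 < |(t.val : ℤ) - (t'.val : ℤ)| → H t t' = 0)
    (x : Fin (T+1) → ℂ) :
    star x ⬝ᵥ H *ᵥ x =
      (∑ t : Fin (T+1), (starRingEnd ℂ) (x t) * H t t * x t)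
      + ((∑ t : Fin T, (starRingEnd ℂ) (x t.castSucc) * H t.castSucc t.succ * x t.succ)
      + (∑ t : Fin T, (starRingEnd ℂ) (x t.succ) * H t.succ t.castSucc * x t.castSucc)) := by
  classical
  set f : Fin (T+1) × Fin (T+1) → ℂ :=
    fun p => (starRingEnd ℂ) (x p.1) * H p.1 p.2 * x p.2 with hf
  have h0 : star x ⬝ᵥ H *ᵥ x = ∑ p ∈ Finset.univ ×ˢ Finset.univ, f p := by
    rw [Finset.sum_product]
    simp only [dotProduct, mulVec, dotProduct, Pi.star_apply, Finset.mul_sum, hf,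
      Complex.star_def]
    congr 1; ext t; congr 1; ext t'; ring
  set A : Finset (Fin (T+1) × Fin (T+1)) := Finset.univ.image (fun t : Fin (T+1) => (t, t))
  set B : Finset (Fin (T+1) × Fin (T+1)) :=
    Finset.univ.image (fun t : Fin T => (t.castSucc, t.succ))
  set C : Finset (Fin (T+1) × Fin (T+1)) :=
    Finset.univ.image (fun t : Fin T => (t.succ, t.castSucc))
  have hsub : A ∪ (B ∪ C) ⊆ Finset.univ ×ˢ Finset.univ := by
    intro p _; simp [Finset.mem_product]
  have hvanish : ∀ p ∈ Finset.univ ×ˢ Finset.univ, p ∉ A ∪ (B ∪ C) → f p = 0 := by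
    rintro ⟨s, t⟩ _ hp
    simp only [Finset.mem_union, A, B, C, Finset.mem_image, Finset.mem_univ, true_and,
      not_or, not_exists] at hp
    obtain ⟨h1, h2, h3⟩ := hp
    have hH0 : H s t = 0 := by
      apply htri
      by_contra hcon
      push_neg at hcon
      rw [abs_le] at hcon
      obtain ⟨hc1, hc2⟩ := hcon
      rcases lt_trichotomy s.val t.val with hlt | heq | hgt
      · -- t = s + 1
        have hsT : s.val < T := by omega
        exact h2 ⟨s.val, hsT⟩ (by
          ext <;> simp [Fin.castSucc, Fin.succ] <;> omega)
      · exact h1 s (by ext <;> simp <;> omega)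
      · have htT : t.val < T := by omega
        exact h3 ⟨t.val, htT⟩ (by
          ext <;> simp [Fin.castSucc, Fin.succ] <;> omega)
    simp [hf, hH0]
  have hdisjBC : Disjoint B C := by
    rw [Finset.disjoint_left]
    rintro ⟨s, t⟩ hB hC
    simp only [B, C, Finset.mem_image, Finset.mem_univ, true_and] at hB hC
    obtain ⟨u, hu⟩ := hB; obtain ⟨v, hv⟩ := hC
    have h1 := congrArg (fun p => (p.1 : Fin (T+1)).val) hu
    have h2 := congrArg (fun p => (p.2 : Fin (T+1)).val) hu
    have h3 := congrArg (fun p => (p.1 : Fin (T+1)).val) hv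
    have h4 := congrArg (fun p => (p.2 : Fin (T+1)).val) hv
    simp [Fin.val_succ] at h1 h2 h3 h4
    omega
  have hdisjA : Disjoint A (B ∪ C) := by
    rw [Finset.disjoint_left]
    rintro ⟨s, t⟩ hA hBC
    simp only [A, Finset.mem_image, Finset.mem_univ, true_and] at hA
    obtain ⟨u, hu⟩ := hA
    have h1 := congrArg (fun p => (p.1 : Fin (T+1)).val) hu
    have h2 := congrArg (fun p => (p.2 : Fin (T+1)).val) hu
    simp at h1 h2
    rcases Finset.mem_union.mp hBC with hB | hB <;>
    · simp only [B, C, Finset.mem_image, Finset.mem_univ, true_and] at hB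
      obtain ⟨v, hv⟩ := hB
      have h3 := congrArg (fun p => (p.1 : Fin (T+1)).val) hv
      have h4 := congrArg (fun p => (p.2 : Fin (T+1)).val) hv
      simp [Fin.val_succ] at h3 h4
      omega
  rw [h0, ← Finset.sum_subset hsub hvanish, Finset.sum_union hdisjA, Finset.sum_union hdisjBC]
  congr 1
  · rw [Finset.sum_image (fun a _ b _ h => congrArg Prod.fst h)]
  congr 1
  · rw [Finset.sum_image ?_]
    intro a _ b _ h
    exact Fin.castSucc_injective _ (congrArg Prod.fst h)
  · rw [Finset.sum_image ?_]
    intro a _ b _ h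
    exact Fin.succ_injective _ (congrArg Prod.fst h)

noncomputable def psGauge (T : ℕ) (b : Fin T → ℂ) : ℕ → ℂ
  | 0 => 1
  | (t+1) => if h : t < T then
      -(psGauge T b t) * (starRingEnd ℂ) (b ⟨t, h⟩) / (‖b ⟨t, h⟩‖ : ℂ) else 1

lemma gauge_norm (T : ℕ) (b : Fin T → ℂ) (hb : ∀ t, b t ≠ 0) :
    ∀ k, ‖psGauge T b k‖ = 1 := by
  intro k
  induction k with
  | zero => simp [psGauge]
  | succ t ih =>
    rw [psGauge]
    by_cases h : t < T
    · rw [dif_pos h]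
      have hbt : b ⟨t, h⟩ ≠ 0 := hb _
      have hbn : ‖b ⟨t, h⟩‖ ≠ 0 := norm_ne_zero_iff.mpr hbt
      rw [norm_div, norm_mul, norm_neg, ih, RingHomIsometric.norm_map]
      simpa using div_self hbn
    · rw [dif_neg h]; simp

lemma gauge_mul_conj (T : ℕ) (b : Fin T → ℂ) (hb : ∀ t, b t ≠ 0) (k : ℕ) :
    psGauge T b k * (starRingEnd ℂ) (psGauge T b k) = 1 := by
  rw [Complex.mul_conj', gauge_norm T b hb k]
  norm_num

lemma gauge_rel (T : ℕ) (b : Fin T → ℂ) (hb : ∀ t, b t ≠ 0) (t : Fin T) :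
    b t * (starRingEnd ℂ) (psGauge T b t.val) * psGauge T b (t.val + 1)
      = -((‖b t‖ : ℝ) : ℂ) := by
  have hbt : b t ≠ 0 := hb t
  have hbn : ((‖b t‖ : ℝ) : ℂ) ≠ 0 := by
    simpa using norm_ne_zero_iff.mpr hbt
  rw [psGauge, dif_pos t.isLt, Fin.eta]
  have hu := gauge_mul_conj T b hb t.val
  have hbc : b t * (starRingEnd ℂ) (b t) = ((‖b t‖ : ℝ) : ℂ) ^ 2 := by
    push_cast [Complex.mul_conj']
    ring
  calc b t * (starRingEnd ℂ) (psGauge T b t.val) *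
        (-(psGauge T b t.val) * (starRingEnd ℂ) (b t) / ((‖b t‖ : ℝ) : ℂ))
      = -((b t * (starRingEnd ℂ) (b t)) *
          (psGauge T b t.val * (starRingEnd ℂ) (psGauge T b t.val))) / ((‖b t‖ : ℝ) : ℂ) := by
        ring
    _ = -(((‖b t‖ : ℝ) : ℂ) ^ 2 * 1) / ((‖b t‖ : ℝ) : ℂ) := by rw [hbc, hu]
    _ = -((‖b t‖ : ℝ) : ℂ) := by
        rw [mul_one, pow_two, neg_div, mul_div_assoc, div_self hbn, mul_one]

theorem stmt11 (T : ℕ) (hT : 1 ≤ T)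
    (H : Matrix (Fin (T + 1)) (Fin (T + 1)) ℂ) (hH : H.IsHermitian)
    -- `H` is tridiagonal
    (htri : ∀ t t' : Fin (T + 1), 1 < |(t.val : ℤ) - (t'.val : ℤ)| → H t t' = 0)
    -- the off-diagonal entries `b_t = H_{t,t+1}` are nonzero
    (hb : ∀ t : Fin T, H t.castSucc t.succ ≠ 0)
    (ψ : Fin (T + 1) → ℂ) (hψ0 : ψ ≠ 0)
    -- `ψ` is an eigenvector for the smallest eigenvalue of `H`
    (hψ : H.mulVec ψ = ((⨅ i, hH.eigenvalues i : ℝ) : ℂ) • ψ)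
    (hψfirst : ψ 0 ≠ 0) (hψlast : ψ (Fin.last T) ≠ 0) :
    (∀ t : Fin (T + 1), ψ t ≠ 0) ∧
    (∀ t : Fin T, ∃ r : ℝ, r < 0 ∧
      ψ t.succ * H t.castSucc t.succ / ψ t.castSucc = (r : ℂ)) := by
  classical
  set E : ℝ := ⨅ i, hH.eigenvalues i with hE
  set bb : Fin T → ℂ := fun t => H t.castSucc t.succ with hbb
  have hbne : ∀ t, bb t ≠ 0 := fun t => hb t
  set u : ℕ → ℂ := psGauge T bb with hu_def
  have hun : ∀ k, ‖u k‖ = 1 := gauge_norm T bb hbne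
  have huu : ∀ k, u k * (starRingEnd ℂ) (u k) = 1 := gauge_mul_conj T bb hbne
  have hrel : ∀ t : Fin T,
      bb t * (starRingEnd ℂ) (u t.val) * u (t.val + 1) = -((‖bb t‖ : ℝ) : ℂ) :=
    gauge_rel T bb hbne
  set χ : Fin (T + 1) → ℂ := fun t => ((‖ψ t‖ : ℝ) : ℂ) * u t.val with hχ
  have hherm : ∀ i j, (starRingEnd ℂ) (H i j) = H j i := fun i j => hH.apply j i
  set z : Fin T → ℂ :=
    fun t => (starRingEnd ℂ) (ψ t.castSucc) * H t.castSucc t.succ * ψ t.succ with hz_def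
  -- pointwise identities
  have hconjχ : ∀ t : Fin (T + 1),
      (starRingEnd ℂ) (χ t) = ((‖ψ t‖ : ℝ) : ℂ) * (starRingEnd ℂ) (u t.val) := by
    intro t; simp [hχ, _root_.map_mul, Complex.conj_ofReal]
  have hnormχ : ∀ t : Fin (T + 1),
      (starRingEnd ℂ) (χ t) * χ t = (starRingEnd ℂ) (ψ t) * ψ t := by
    intro t
    have h2 : (starRingEnd ℂ) (ψ t) * ψ t = ((‖ψ t‖ : ℝ) : ℂ) ^ 2 := by
      rw [mul_comm]; push_cast [Complex.mul_conj']; ring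
    rw [hconjχ t, h2]
    calc ((‖ψ t‖ : ℝ) : ℂ) * (starRingEnd ℂ) (u t.val) * (((‖ψ t‖ : ℝ) : ℂ) * u t.val)
        = ((‖ψ t‖ : ℝ) : ℂ) ^ 2 * (u t.val * (starRingEnd ℂ) (u t.val)) := by ring
      _ = ((‖ψ t‖ : ℝ) : ℂ) ^ 2 := by rw [huu]; ring
  have hdiag : ∀ t : Fin (T + 1),
      (starRingEnd ℂ) (χ t) * H t t * χ t = (starRingEnd ℂ) (ψ t) * H t t * ψ t := by
    intro t
    calc (starRingEnd ℂ) (χ t) * H t t * χ t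
        = H t t * ((starRingEnd ℂ) (χ t) * χ t) := by ring
      _ = H t t * ((starRingEnd ℂ) (ψ t) * ψ t) := by rw [hnormχ]
      _ = (starRingEnd ℂ) (ψ t) * H t t * ψ t := by ring
  have hoffχ : ∀ t : Fin T,
      (starRingEnd ℂ) (χ t.castSucc) * H t.castSucc t.succ * χ t.succ
        = -((‖bb t‖ * ‖ψ t.castSucc‖ * ‖ψ t.succ‖ : ℝ) : ℂ) := by
    intro t
    have hcs : (t.castSucc : Fin (T + 1)).val = t.val := rfl
    have hs : (t.succ : Fin (T + 1)).val = t.val + 1 := rfl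
    calc (starRingEnd ℂ) (χ t.castSucc) * H t.castSucc t.succ * χ t.succ
        = ((‖ψ t.castSucc‖ : ℝ) : ℂ) * ((‖ψ t.succ‖ : ℝ) : ℂ) *
            (bb t * (starRingEnd ℂ) (u t.val) * u (t.val + 1)) := by
          rw [hconjχ, hχ]
          simp only [hcs, hs, hbb]
          ring
      _ = -((‖bb t‖ * ‖ψ t.castSucc‖ * ‖ψ t.succ‖ : ℝ) : ℂ) := by
          rw [hrel t]; push_cast; ring
  have hoffχ2 : ∀ t : Fin T,
      (starRingEnd ℂ) (χ t.succ) * H t.succ t.castSucc * χ t.castSucc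
        = -((‖bb t‖ * ‖ψ t.castSucc‖ * ‖ψ t.succ‖ : ℝ) : ℂ) := by
    intro t
    have h1 : (starRingEnd ℂ) (χ t.succ) * H t.succ t.castSucc * χ t.castSucc
        = (starRingEnd ℂ) ((starRingEnd ℂ) (χ t.castSucc) * H t.castSucc t.succ * χ t.succ) := by
      conv_rhs => rw [_root_.map_mul, _root_.map_mul, Complex.conj_conj, hherm]
      ring
    rw [h1, hoffχ t, map_neg, Complex.conj_ofReal]
  have hoffψ2 : ∀ t : Fin T,
      (starRingEnd ℂ) (ψ t.succ) * H t.succ t.castSucc * ψ t.castSucc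
        = (starRingEnd ℂ) (z t) := by
    intro t
    rw [hz_def, _root_.map_mul, _root_.map_mul, Complex.conj_conj, hherm]
    ring
  -- the quadratic forms
  have hQψ : star ψ ⬝ᵥ H *ᵥ ψ = ((E : ℝ) : ℂ) * (star ψ ⬝ᵥ ψ) := by
    rw [hψ, dotProduct_smul, smul_eq_mul]
  have hnormeq : star χ ⬝ᵥ χ = star ψ ⬝ᵥ ψ := by
    simp only [dotProduct, Pi.star_apply, Complex.star_def]
    exact Finset.sum_congr rfl fun t _ => hnormχ t
  have hexpψ := tridiag_expand T H htri ψ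
  have hexpχ := tridiag_expand T H htri χ
  set D : ℝ := ∑ t : Fin (T + 1), ((starRingEnd ℂ) (ψ t) * H t t * ψ t).re with hD
  have hAψ : (star ψ ⬝ᵥ H *ᵥ ψ).re = D + ∑ t : Fin T, 2 * (z t).re := by
    rw [hexpψ]
    simp only [Complex.add_re, Complex.re_sum]
    congr 1
    rw [← Finset.sum_add_distrib]
    refine Finset.sum_congr rfl fun t _ => ?_
    rw [hoffψ2 t, Complex.conj_re]
    have : ((starRingEnd ℂ) (ψ t.castSucc) * H t.castSucc t.succ * ψ t.succ) = z t := rfl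
    rw [this]; ring
  have hAχ : (star χ ⬝ᵥ H *ᵥ χ).re
      = D + ∑ t : Fin T, (-2) * (‖bb t‖ * ‖ψ t.castSucc‖ * ‖ψ t.succ‖) := by
    rw [hexpχ]
    simp only [Complex.add_re, Complex.re_sum]
    congr 1
    · exact Finset.sum_congr rfl fun t _ => congrArg Complex.re (hdiag t)
    rw [← Finset.sum_add_distrib]
    refine Finset.sum_congr rfl fun t _ => ?_
    rw [hoffχ t, hoffχ2 t]
    simp only [Complex.neg_re, Complex.ofReal_re]
    ring
  set W : Fin T → ℝ :=
    fun t => 2 * ((z t).re + ‖bb t‖ * ‖ψ t.castSucc‖ * ‖ψ t.succ‖) with hW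
  have habs : ∀ t : Fin T, ‖z t‖ = ‖bb t‖ * ‖ψ t.castSucc‖ * ‖ψ t.succ‖ := by
    intro t
    rw [hz_def]
    simp only [norm_mul, Complex.norm_conj]
    rw [hbb]
    ring
  have hW0 : ∀ t ∈ Finset.univ, 0 ≤ W t := by
    intro t _
    have h1 : -‖z t‖ ≤ (z t).re := (abs_le.mp (Complex.abs_re_le_norm (z t))).1
    rw [hW]
    have := habs t
    simp only []
    nlinarith [this, h1]
  have hsumW : ∑ t : Fin T, W t = (star ψ ⬝ᵥ H *ᵥ ψ).re - (star χ ⬝ᵥ H *ᵥ χ).re := by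
    have hsplit : ∑ t : Fin T, W t = (∑ t : Fin T, 2 * (z t).re)
        + ∑ t : Fin T, 2 * (‖bb t‖ * ‖ψ t.castSucc‖ * ‖ψ t.succ‖) := by
      rw [← Finset.sum_add_distrib]
      refine Finset.sum_congr rfl fun t _ => ?_
      simp only [hW]; ring
    have hneg : ∑ t : Fin T, (-2) * (‖bb t‖ * ‖ψ t.castSucc‖ * ‖ψ t.succ‖)
        = -∑ t : Fin T, 2 * (‖bb t‖ * ‖ψ t.castSucc‖ * ‖ψ t.succ‖) := by
      rw [← Finset.sum_neg_distrib]
      exact Finset.sum_congr rfl fun t _ => by ring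
    rw [hsplit, hAψ, hAχ, hneg]
    ring
  have hQψre : (star ψ ⬝ᵥ H *ᵥ ψ).re = E * (star χ ⬝ᵥ χ).re := by
    rw [hQψ, hnormeq]
    simp [Complex.mul_re]
  have hsum_le : ∑ t : Fin T, W t ≤ 0 := by
    rw [hsumW, hQψre]
    have := quadform_ge H hH χ
    rw [← hE] at this
    linarith
  have hWzero : ∀ t : Fin T, W t = 0 := by
    have h := (Finset.sum_eq_zero_iff_of_nonneg hW0).mp
      (le_antisymm hsum_le (Finset.sum_nonneg hW0))
    exact fun t => h t (Finset.mem_univ t)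
  have hzre : ∀ t : Fin T, (z t).re = -‖z t‖ := by
    intro t
    have h := hWzero t
    rw [hW] at h
    simp only [] at h
    rw [habs t]
    linarith
  have hzeq : ∀ t : Fin T, z t = -((‖z t‖ : ℝ) : ℂ) := by
    intro t
    have h1 := hzre t
    have h2 : ‖z t‖ ^ 2 = (z t).re ^ 2 + (z t).im ^ 2 := by
      rw [Complex.sq_norm, Complex.normSq_apply]; ring
    have h5 : (z t).re ^ 2 = ‖z t‖ ^ 2 := by rw [h1]; ring
    have h4 : (z t).im ^ 2 = 0 := by linarith
    have h3 : (z t).im = 0 := by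
      exact pow_eq_zero_iff (by norm_num) |>.mp h4
    apply Complex.ext
    · simp [h1]
    · simp [h3]
  -- χ is an eigenvector
  have hQχre : (star χ ⬝ᵥ H *ᵥ χ).re = E * (star χ ⬝ᵥ χ).re := by
    have h := hsumW
    rw [Finset.sum_eq_zero fun t _ => hWzero t] at h
    rw [← hQψre]
    linarith
  have hχeig : H *ᵥ χ = ((E : ℝ) : ℂ) • χ := by
    have := eigvec_of_quadform_le H hH χ (by rw [← hE]; exact le_of_eq hQχre)
    rw [← hE] at this
    exact this
  -- nonvanishing
  have hne : ∀ k : ℕ, ∀ hk : k < T + 1, ψ ⟨k, hk⟩ ≠ 0 := by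
    intro k
    induction k with
    | zero => intro hk; exact hψfirst
    | succ k ih =>
      intro hk
      by_cases hkT : k + 1 = T
      · have : (⟨k + 1, hk⟩ : Fin (T + 1)) = Fin.last T := by
          apply Fin.ext; simp [hkT]
        rw [this]; exact hψlast
      · have hk1T : k + 1 < T := by omega
        have hkT' : k < T := by omega
        intro hzero
        apply ih (by omega)
        set s : Fin (T + 1) := ⟨k + 1, hk⟩ with hs
        set a : Fin (T + 1) := ⟨k, by omega⟩ with ha
        set c : Fin (T + 1) := ⟨k + 2, by omega⟩ with hc
        have hχs : χ s = 0 := by show ((‖ψ s‖ : ℝ) : ℂ) * u s.val = 0; rw [hzero]; simp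
        have heig := congrFun hχeig s
        simp only [Pi.smul_apply, smul_eq_mul] at heig
        rw [hχs, mul_zero] at heig
        have hsum2 : (H *ᵥ χ) s = H s a * χ a + H s c * χ c := by
          have h0 : (H *ᵥ χ) s = ∑ t', H s t' * χ t' := rfl
          rw [h0]
          rw [← Finset.sum_subset (Finset.subset_univ {a, c})]
          · rw [Finset.sum_pair (by
              intro h
              have := congrArg Fin.val h
              simp [ha, hc] at this)]
          · intro t' _ ht'
            simp only [Finset.mem_insert, Finset.mem_singleton] at ht'
            push_neg at ht'
            by_cases hts : t' = s
            · rw [hts, hχs, mul_zero]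
            · have e1 : t'.val ≠ k := fun h => ht'.1 (Fin.ext (by simp [ha, h]))
              have e2 : t'.val ≠ k + 2 := fun h => ht'.2 (Fin.ext (by simp [hc, h]))
              have e3 : t'.val ≠ k + 1 := fun h => hts (Fin.ext (by simp [hs, h]))
              have hsv : s.val = k + 1 := rfl
              have h5 := t'.isLt
              have habs2 : 1 < |((s.val : ℤ)) - (t'.val : ℤ)| := by
                rw [hsv, lt_abs]
                push_cast
                omega
              rw [htri s t' habs2, zero_mul]
        set t0 : Fin T := ⟨k, hkT'⟩ with ht0
        set t1 : Fin T := ⟨k + 1, hk1T⟩ with ht1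
        have hsa : H s a = (starRingEnd ℂ) (bb t0) := by
          have h1 : t0.castSucc = a := by apply Fin.ext; simp [ht0, ha]
          have h2 : t0.succ = s := by apply Fin.ext; simp [ht0, hs]
          rw [← h1, ← h2]
          exact (hherm t0.castSucc t0.succ).symm
        have hsc : H s c = bb t1 := by
          have h1 : t1.castSucc = s := by apply Fin.ext; simp [ht1, hs]
          have h2 : t1.succ = c := by apply Fin.ext; simp [ht1, hc]
          rw [← h1, ← h2]
        have hχa : χ a = ((‖ψ a‖ : ℝ) : ℂ) * u k := rfl
        have hχc : χ c = ((‖ψ c‖ : ℝ) : ℂ) * u (k + 2) := rfl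
        have eq0 : (starRingEnd ℂ) (bb t0) * (((‖ψ a‖ : ℝ) : ℂ) * u k)
            + bb t1 * (((‖ψ c‖ : ℝ) : ℂ) * u (k + 2)) = 0 := by
          rw [← hsa, ← hsc, ← hχa, ← hχc, ← hsum2, heig]
        have g0 : bb t0 * (starRingEnd ℂ) (u k) * u (k + 1) = -((‖bb t0‖ : ℝ) : ℂ) :=
          hrel t0
        have g1 : bb t1 * (starRingEnd ℂ) (u (k + 1)) * u (k + 2) = -((‖bb t1‖ : ℝ) : ℂ) :=
          hrel t1
        have g0' : (starRingEnd ℂ) (bb t0) * u k * (starRingEnd ℂ) (u (k + 1))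
            = -((‖bb t0‖ : ℝ) : ℂ) := by
          have h := congrArg (starRingEnd ℂ) g0
          simpa [_root_.map_mul, Complex.conj_conj, Complex.conj_ofReal, mul_comm, mul_assoc,
            mul_left_comm] using h
        have key : ((‖bb t0‖ * ‖ψ a‖ + ‖bb t1‖ * ‖ψ c‖ : ℝ) : ℂ) = 0 := by
          push_cast
          linear_combination (-(starRingEnd ℂ) (u (k + 1))) * eq0
            + ((‖ψ a‖ : ℝ) : ℂ) * g0' + ((‖ψ c‖ : ℝ) : ℂ) * g1
        have keyr : ‖bb t0‖ * ‖ψ a‖ + ‖bb t1‖ * ‖ψ c‖ = 0 := by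
          exact_mod_cast key
        have hb0 : ‖bb t0‖ > 0 := norm_pos_iff.mpr (hbne t0)
        have h4 : 0 ≤ ‖bb t1‖ * ‖ψ c‖ := mul_nonneg (norm_nonneg _) (norm_nonneg _)
        have h5 : 0 ≤ ‖ψ a‖ := norm_nonneg _
        have : ‖ψ a‖ = 0 := by nlinarith
        exact norm_eq_zero.mp this
  have part1 : ∀ t : Fin (T + 1), ψ t ≠ 0 := by
    intro t
    have := hne t.val t.isLt
    simpa [Fin.eta] using this
  refine ⟨part1, fun t => ?_⟩
  have h1 : ψ t.castSucc ≠ 0 := part1 _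
  have h2 : ψ t.succ ≠ 0 := part1 _
  have hb3 : H t.castSucc t.succ ≠ 0 := hb t
  have hzne : z t ≠ 0 := by
    rw [hz_def]
    simp only []
    exact mul_ne_zero (mul_ne_zero (by simpa using h1) hb3) h2
  have habspos : 0 < ‖z t‖ := norm_pos_iff.mpr hzne
  have hnpos : (0 : ℝ) < ‖ψ t.castSucc‖ ^ 2 := pow_pos (norm_pos_iff.mpr h1) 2
  refine ⟨-(‖z t‖) / ‖ψ t.castSucc‖ ^ 2, div_neg_of_neg_of_pos (by linarith) hnpos, ?_⟩
  rw [div_eq_iff h1]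
  have hc2 : (starRingEnd ℂ) (ψ t.castSucc) * ψ t.castSucc = ((‖ψ t.castSucc‖ : ℝ) : ℂ) ^ 2 := by
    rw [mul_comm]; push_cast [Complex.mul_conj']; ring
  have hzt := hzeq t
  rw [hz_def] at hzt
  simp only [] at hzt
  push_cast
  rw [div_mul_eq_mul_div, eq_comm, div_eq_iff (pow_ne_zero 2 (Complex.ofReal_ne_zero.mpr (norm_ne_zero_iff.mpr h1)) : ((‖ψ t.castSucc‖ : ℝ) : ℂ) ^ 2 ≠ 0)]
  linear_combination (-(ψ t.castSucc)) * hzt + (ψ t.succ * H t.castSucc t.succ) * hc2
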